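/- Every nonempty closed invariant subset Y₀ ⊆ Y contains τ(u) for some vertex u ∈ E⁰, and for any such u, Y₀ contains τ(w) for every path w ∈ E* with s(w) = u. -/

import Mathlib

/-- A directed graph: vertices, edges, source and range maps. -/
structure DirGraph where
  V : Type
  E : Type
  s : E → V
  r : E → V

namespace DirGraph

/-- `G.IsPathFrom x l` : the list of edges `l` (in walking order) forms a
path starting at the vertex `x`. -/
def IsPathFrom (G : DirGraph) : G.V → List G.E → Prop
  | _, [] => True
  | x, e :: es => G.s e = x ∧ G.IsPathFrom (G.r e) es

/-- The vertex reached after walking the edges `l` starting at `x`. -/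
def endAt (G : DirGraph) : G.V → List G.E → G.V
  | x, [] => x
  | _, e :: es => G.endAt (G.r e) es

/-- A finite path in `G`: a source vertex together with a composable list of
edges (in walking order).  Vertices are the paths with no edges. -/
structure Path (G : DirGraph) where
  src : G.V
  edges : List G.E
  valid : G.IsPathFrom src edges

namespace Path

variable {G : DirGraph}

/-- The range (final vertex) of a path. -/
def rng (p : G.Path) : G.V := G.endAt p.src p.edges

/-- The length of a path. -/
def length (p : G.Path) : ℕ := p.edges.length

/-- The trivial path at a vertex. -/
def nil (x : G.V) : G.Path := ⟨x, [], trivial⟩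

end Path

variable {G : DirGraph}

theorem isPathFrom_append :
    ∀ (l₁ l₂ : List G.E) (x : G.V), G.IsPathFrom x l₁ →
      G.IsPathFrom (G.endAt x l₁) l₂ → G.IsPathFrom x (l₁ ++ l₂)
  | [], _, _, _, h₂ => h₂
  | e :: es, l₂, _, h₁, h₂ => ⟨h₁.1, isPathFrom_append es l₂ (G.r e) h₁.2 h₂⟩

theorem endAt_append :
    ∀ (l₁ l₂ : List G.E) (x : G.V), G.endAt x (l₁ ++ l₂) = G.endAt (G.endAt x l₁) l₂
  | [], _, _ => rfl
  | e :: es, l₂, x => endAt_append es l₂ (G.r e)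

theorem isPathFrom_take_drop :
    ∀ (l : List G.E) (k : ℕ) (x : G.V), G.IsPathFrom x l →
      G.IsPathFrom (G.endAt x (l.take k)) (l.drop k)
  | [], k, _, h => by cases k <;> exact h
  | _ :: _, 0, _, h => h
  | e :: es, k + 1, x, h => isPathFrom_take_drop es k (G.r e) h.2

/-- Extend a path by one more edge at its end (`p.cons e` is the path `e·p`). -/
def Path.cons (p : G.Path) (e : G.E) (h : G.s e = p.rng) : G.Path :=
  ⟨p.src, p.edges ++ [e], isPathFrom_append p.edges [e] p.src p.valid ⟨h, trivial⟩⟩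

@[simp] theorem Path.cons_length (p : G.Path) (e : G.E) (h : G.s e = p.rng) :
    (p.cons e h).length = p.length + 1 := by
  simp [Path.cons, Path.length]

/-- The remainder `w(n)` of a path modulo `n`: the final segment of length
`|w| % n` (the part of `w` walked last). -/
def Path.rem (p : G.Path) (n : ℕ) : G.Path :=
  ⟨G.endAt p.src (p.edges.take (p.length - p.length % n)),
   p.edges.drop (p.length - p.length % n),
   isPathFrom_take_drop p.edges _ p.src p.valid⟩

theorem Path.rem_length (p : G.Path) (n : ℕ) : (p.rem n).length = p.length % n := by
  show (p.edges.drop (p.length - p.length % n)).length = _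
  rw [List.length_drop]
  exact Nat.sub_sub_self (Nat.mod_le _ _)

theorem Path.rem_rng (p : G.Path) (n : ℕ) : (p.rem n).rng = p.rng := by
  show G.endAt (G.endAt p.src (p.edges.take (p.length - p.length % n)))
      (p.edges.drop (p.length - p.length % n)) = _
  rw [← endAt_append, List.take_append_drop]
  rfl

/-- The graph `E(n)`: vertices are paths of length `< n` in `G`, edges are
pairs `(e, w)` with `s(e) = r(w)`; `s(e,w) = w` and `r(e,w) = ew` if
`|w| < n - 1`, and `r(e,w) = r(e)` if `|w| = n - 1`. -/
def graphN (G : DirGraph) (n : ℕ) : DirGraph where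
  V := {w : G.Path // w.length < n}
  E := {p : G.E × G.Path // p.2.length < n ∧ G.s p.1 = p.2.rng}
  s := fun f => ⟨f.val.2, f.prop.1⟩
  r := fun f =>
    if h : f.val.2.length + 1 < n then
      ⟨f.val.2.cons f.val.1 f.prop.2, by simpa using h⟩
    else
      ⟨Path.nil (G.r f.val.1), by
        have := f.prop.1
        simp only [Path.nil, Path.length, List.length_nil]
        omega⟩

/-- A factor map between (finite) directed graphs. -/
structure FactorMap (F E : DirGraph) where
  m0 : F.V → E.V
  m1 : F.E → E.E
  src_eq : ∀ f, E.s (m1 f) = m0 (F.s f)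
  rng_eq : ∀ f, E.r (m1 f) = m0 (F.r f)
  lift : ∀ (e' : E.E) (v : F.V), E.s e' = m0 v →
    ∃! f : F.E, m1 f = e' ∧ F.s f = v

/-- The simple loop (cycle) digraph with `j` vertices. -/
def cyc (j : ℕ) : DirGraph where
  V := ZMod j
  E := ZMod j
  s := id
  r := fun i => i + 1

end DirGraph

namespace DirGraph

/-- `Xc G n i` is the (discrete) space `X_{i+1}` of paths in `G` of length
`< n (i+1)` whose length is divisible by `n i`. -/
abbrev Xc (G : DirGraph) (n : ℕ → ℕ) (i : ℕ) : Type :=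
  {w : G.Path // w.length < n (i + 1) ∧ n i ∣ w.length}

instance (G : DirGraph) (n : ℕ → ℕ) (i : ℕ) : TopologicalSpace (Xc G n i) := ⊥

instance (G : DirGraph) (n : ℕ → ℕ) (i : ℕ) : DiscreteTopology (Xc G n i) := ⟨rfl⟩

/-- `Yt G n` is the `{n_k}`-compactification `Y` of `E*`: the composable
sequences in `Π_i X_i`, with the product topology (each `X_i` discrete). -/
abbrev Yt (G : DirGraph) (n : ℕ → ℕ) : Type :=
  {y : ∀ i, Xc G n i // ∀ i, (y i).val.src = (y (i + 1)).val.rng}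

/-- The `i`-th coordinate path of an element of `Y`. -/
def yc {G : DirGraph} {n : ℕ → ℕ} (y : Yt G n) (i : ℕ) : G.Path := (y.val i).val

/-- The domain `D_e = { y ∈ Y : r(y₁) = s(e) }` of the odometer map `σ_e`. -/
def De (G : DirGraph) (n : ℕ → ℕ) (e : G.E) : Set (Yt G n) :=
  {y | (yc y 0).rng = G.s e}

/-- `Represents G n w y` says that `y ∈ Y` is the image `τ(w)` of the path
`w` under the canonical embedding: from some index `k` on the coordinates are
the trivial path at `s(w)`, and `w` is the concatenation `w₁ w₂ ⋯ w_k` of the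
first `k` coordinates (the `k`-th walked first). -/
def Represents (G : DirGraph) (n : ℕ → ℕ) (w : G.Path) (y : Yt G n) : Prop :=
  ∃ k : ℕ,
    (∀ i, k ≤ i → (yc y i).edges = [] ∧ (yc y i).src = w.src) ∧
    w.edges = (((List.range k).map fun i => (yc y i).edges).reverse).flatten

/-- `Carry G n e y z i0` : `z = σ_e(y)` where `i0 = i(y) < ∞` is the least
index with `|y_{i0}| < n_{i0+1} - n_{i0}`: the coordinates below `i0` of `z`
are the trivial path at `r(e)`, the `i0`-th is `e y₀ y₁ ⋯ y_{i0}`, and the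
coordinates above `i0` are unchanged. -/
def Carry (G : DirGraph) (n : ℕ → ℕ) (e : G.E) (y z : Yt G n) (i0 : ℕ) : Prop :=
  (yc y i0).length < n (i0 + 1) - n i0 ∧
  (∀ i < i0, ¬ (yc y i).length < n (i + 1) - n i) ∧
  (∀ i < i0, (yc z i).edges = [] ∧ (yc z i).src = G.r e) ∧
  (yc z i0).src = (yc y i0).src ∧
  (yc z i0).edges =
    (yc y i0).edges ++ (((List.range i0).map fun i => (yc y i).edges).reverse).flatten
      ++ [e] ∧
  ∀ i, i0 < i → yc z i = yc y i

/-- `OdRel G n e y z` : `z = σ_e(y)`, the graph of the odometer map `σ_e`: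
either there is a least index `i0 = i(y)` and a carry happens there, or all
coordinates of `y` are maximal and `z = (r(e), r(e), …)`. -/
def OdRel (G : DirGraph) (n : ℕ → ℕ) (e : G.E) (y z : Yt G n) : Prop :=
  (∃ i0, Carry G n e y z i0) ∨
  ((∀ i, ¬ (yc y i).length < n (i + 1) - n i) ∧
    ∀ i, (yc z i).edges = [] ∧ (yc z i).src = G.r e)

/-- A subset `B ⊆ Y` is invariant for the odometer maps `σ`. -/
def Invariant (G : DirGraph) (n : ℕ → ℕ) (σ : G.E → Yt G n → Yt G n)
    (B : Set (Yt G n)) : Prop :=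
  (∀ e : G.E, ∀ y ∈ B ∩ De G n e, σ e y ∈ B) ∧
  (∀ y : Yt G n, (∃ f : G.E, ∃ z ∈ De G n f ∩ B, σ f z = y) → y ∈ B)

end DirGraph

namespace DirGraph

theorem Path.ext' {G : DirGraph} {p q : G.Path} (h1 : p.src = q.src)
    (h2 : p.edges = q.edges) : p = q := by
  cases p; cases q; cases h1; cases h2; rfl

variable {G : DirGraph} {n : ℕ → ℕ}

/-- Concatenation of the first `j` coordinate paths (the `(j-1)`-st walked first). -/
def Fl (y : Yt G n) (j : ℕ) : List G.E :=
  (((List.range j).map fun i => (yc y i).edges).reverse).flatten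

@[simp] theorem Fl_zero (y : Yt G n) : Fl y 0 = [] := rfl

theorem Fl_succ (y : Yt G n) (j : ℕ) :
    Fl y (j + 1) = (yc y j).edges ++ Fl y j := by
  simp [Fl, List.range_succ]

theorem Fl_length (y : Yt G n) (j : ℕ) :
    (Fl y j).length = ∑ i ∈ Finset.range j, (yc y i).length := by
  induction j with
  | zero => simp
  | succ j ih => rw [Fl_succ, Finset.sum_range_succ, List.length_append, ih]
                 simp [Path.length]; ring

theorem Fl_stable (y : Yt G n) {k : ℕ} (h : ∀ i, k ≤ i → (yc y i).edges = []) :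
    ∀ j, k ≤ j → Fl y j = Fl y k := by
  intro j hj
  induction j, hj using Nat.le_induction with
  | base => rfl
  | succ j hj ih => rw [Fl_succ, h j hj, List.nil_append, ih]

theorem Fl_nil (y : Yt G n) {j : ℕ} (h : ∀ i, i < j → (yc y i).edges = []) :
    Fl y j = [] := by
  induction j with
  | zero => rfl
  | succ j ih =>
    rw [Fl_succ, h j (Nat.lt_succ_self j), List.nil_append]
    exact ih fun i hi => h i (Nat.lt_succ_of_lt hi)

theorem Fl_eq_nil_forall (y : Yt G n) :
    ∀ j, Fl y j = [] → ∀ i, i < j → (yc y i).edges = [] := by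
  intro j
  induction j with
  | zero => intro _ i hi; omega
  | succ j ih =>
    intro h i hi
    rw [Fl_succ] at h
    rcases List.append_eq_nil_iff.mp h with ⟨h1, h2⟩
    rcases Nat.lt_succ_iff_lt_or_eq.mp hi with hi | hi
    · exact ih h2 i hi
    · rw [hi]; exact h1

end DirGraph

namespace DirGraph
variable {G : DirGraph} {n : ℕ → ℕ}

theorem n_pos (h0 : n 0 = 1) (hmono : StrictMono n) (i : ℕ) : 1 ≤ n i :=
  h0 ▸ hmono.monotone (Nat.zero_le i)

theorem n_dvd_of_le (hdvd : ∀ i, n i ∣ n (i + 1)) :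
    ∀ {i j : ℕ}, i ≤ j → n i ∣ n j := by
  intro i j hij
  induction j, hij using Nat.le_induction with
  | base => exact dvd_rfl
  | succ j hj ih => exact ih.trans (hdvd j)

/-- A multiple of `d` below `N` (where `d ∣ N`) is at most `N - d`. -/
theorem le_sub_of_dvd_lt {d m N : ℕ} (h1 : d ∣ m) (h2 : d ∣ N) (h3 : m < N) :
    m ≤ N - d := by
  have h4 : d ∣ N - m := Nat.dvd_sub h2 h1
  have h5 : 0 < N - m := by omega
  have := Nat.le_of_dvd h5 h4
  omega

theorem yc_len_le (hdvd : ∀ i, n i ∣ n (i + 1)) (y : Yt G n) (i : ℕ) :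
    (yc y i).length ≤ n (i + 1) - n i :=
  le_sub_of_dvd_lt (y.val i).prop.2 (hdvd i) (y.val i).prop.1

theorem sum_len_lt (h0 : n 0 = 1) (hmono : StrictMono n) (hdvd : ∀ i, n i ∣ n (i + 1))
    (y : Yt G n) (j : ℕ) : (∑ i ∈ Finset.range j, (yc y i).length) + 1 ≤ n j := by
  induction j with
  | zero => simp [h0]
  | succ j ih =>
    rw [Finset.sum_range_succ]
    have h1 := yc_len_le hdvd y j
    have h2 : n j ≤ n (j + 1) := (hmono (Nat.lt_succ_self j)).le
    omega

end DirGraph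

namespace DirGraph
variable {G : DirGraph} {n : ℕ → ℕ}

/-- If all coordinates are trivial paths, the source is constant. -/
theorem src_const (y : Yt G n) (hall : ∀ i, (yc y i).edges = []) :
    ∀ i j, i ≤ j → (yc y i).src = (yc y j).src := by
  intro i j hij
  induction j, hij using Nat.le_induction with
  | base => rfl
  | succ j hj ih =>
    rw [ih]
    have hs : (yc y j).src = (yc y (j+1)).rng := y.prop j
    rw [hs]
    show (yc y (j+1)).rng = _
    unfold Path.rng
    rw [hall (j+1)]
    rfl

theorem rep_nil_coords {u : G.V} {y : Yt G n}
    (h : Represents G n (Path.nil u) y) :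
    ∀ i, (yc y i).edges = [] ∧ (yc y i).src = u := by
  obtain ⟨k, hk1, hk2⟩ := h
  have hFl : Fl y k = [] := hk2.symm
  have hedges : ∀ i, (yc y i).edges = [] := by
    intro i
    rcases Nat.lt_or_ge i k with hi | hi
    · exact Fl_eq_nil_forall y k hFl i hi
    · exact (hk1 i hi).1
  intro i
  refine ⟨hedges i, ?_⟩
  rcases Nat.le_total i k with hi | hi
  · rw [src_const y hedges i k hi]
    exact (hk1 k le_rfl).2
  · exact (hk1 i hi).2

theorem rep_rng {w : G.Path} {y : Yt G n} (h : Represents G n w y) :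
    (yc y 0).rng = w.rng := by
  obtain ⟨k, hk1, hk2⟩ := h
  have key : ∀ m, G.endAt ((yc y m).rng) (Fl y m) = (yc y 0).rng := by
    intro m
    induction m with
    | zero => rfl
    | succ m ih =>
      rw [Fl_succ, endAt_append]
      have h2 : G.endAt ((yc y (m+1)).rng) (yc y m).edges = (yc y m).rng := by
        have hs : (yc y m).src = (yc y (m+1)).rng := y.prop m
        show G.endAt ((yc y (m+1)).rng) (yc y m).edges = G.endAt ((yc y m).src) (yc y m).edges
        rw [hs]
      rw [h2, ih]
  have hsrc : (yc y k).rng = w.src := by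
    unfold Path.rng
    rw [(hk1 k le_rfl).1]
    exact (hk1 k le_rfl).2
  have : w.rng = G.endAt w.src w.edges := rfl
  rw [this, hk2, ← hsrc]
  exact (key k).symm

end DirGraph

namespace DirGraph
variable {G : DirGraph} {n : ℕ → ℕ}

/-- The partial sums of coordinate lengths are determined by the total length. -/
theorem rep_sum_len (h0 : n 0 = 1) (hmono : StrictMono n) (hdvd : ∀ i, n i ∣ n (i + 1))
    {w : G.Path} {y : Yt G n} {k : ℕ}
    (hk1 : ∀ i, k ≤ i → (yc y i).edges = [] ∧ (yc y i).src = w.src)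
    (hk2 : w.edges = Fl y k) :
    ∀ j, ∑ i ∈ Finset.range j, (yc y i).length = w.length % n j := by
  intro j
  have hL : w.length = ∑ i ∈ Finset.range k, (yc y i).length := by
    show w.edges.length = _
    rw [hk2]; exact Fl_length y k
  have hSlt : ∀ m, (∑ i ∈ Finset.range m, (yc y i).length) < n m := by
    intro m; have := sum_len_lt h0 hmono hdvd y m; omega
  rcases Nat.le_total k j with hkj | hkj
  · -- j ≥ k : sum over range j equals sum over range k = w.length, and w.length < n j
    have hsum : ∑ i ∈ Finset.range j, (yc y i).length
        = ∑ i ∈ Finset.range k, (yc y i).length := by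
      induction j, hkj using Nat.le_induction with
      | base => rfl
      | succ j hj ih =>
        rw [Finset.sum_range_succ, ih]
        have : (yc y j).length = 0 := by
          show (yc y j).edges.length = 0
          rw [(hk1 j hj).1]; rfl
        omega
    rw [hsum, ← hL, Nat.mod_eq_of_lt]
    rw [hL]
    calc ∑ i ∈ Finset.range k, (yc y i).length < n k := hSlt k
    _ ≤ n j := hmono.monotone hkj
  · -- j ≤ k
    have hsplit : ∑ i ∈ Finset.range k, (yc y i).length
        = (∑ i ∈ Finset.range j, (yc y i).length)
          + ∑ i ∈ Finset.Ico j k, (yc y i).length := by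
      rw [Finset.range_eq_Ico, Finset.range_eq_Ico]
      exact (Finset.sum_Ico_consecutive (fun i => (yc y i).length) (Nat.zero_le j) hkj).symm
    have hdvdT : n j ∣ ∑ i ∈ Finset.Ico j k, (yc y i).length := by
      apply Finset.dvd_sum
      intro i hi
      have hji : j ≤ i := (Finset.mem_Ico.mp hi).1
      exact (n_dvd_of_le hdvd hji).trans (y.val i).prop.2
    obtain ⟨c, hc⟩ := hdvdT
    rw [hL, hsplit, hc, Nat.add_mul_mod_self_left, Nat.mod_eq_of_lt (hSlt j)]

theorem rep_len (h0 : n 0 = 1) (hmono : StrictMono n) (hdvd : ∀ i, n i ∣ n (i + 1))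
    {w : G.Path} {y : Yt G n} {k : ℕ}
    (hk1 : ∀ i, k ≤ i → (yc y i).edges = [] ∧ (yc y i).src = w.src)
    (hk2 : w.edges = Fl y k) (j : ℕ) :
    (yc y j).length = w.length % n (j + 1) - w.length % n j := by
  have h1 := rep_sum_len h0 hmono hdvd hk1 hk2 j
  have h2 := rep_sum_len h0 hmono hdvd hk1 hk2 (j + 1)
  rw [Finset.sum_range_succ, h1] at h2
  omega

/-- Uniqueness of representation. -/
theorem rep_unique (h0 : n 0 = 1) (hmono : StrictMono n) (hdvd : ∀ i, n i ∣ n (i + 1))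
    {w : G.Path} {y y' : Yt G n}
    (hy : Represents G n w y) (hy' : Represents G n w y') : y = y' := by
  obtain ⟨k, hk1, hk2⟩ := hy
  obtain ⟨k', hk1', hk2'⟩ := hy'
  have hk2 : w.edges = Fl y k := hk2
  have hk2' : w.edges = Fl y' k' := hk2'
  have hlen : ∀ j, (yc y j).length = (yc y' j).length := by
    intro j
    rw [rep_len h0 hmono hdvd hk1 hk2 j, rep_len h0 hmono hdvd hk1' hk2' j]
  have hlenE : ∀ j, (yc y j).edges.length = (yc y' j).edges.length := hlen
  set K := max k k' with hK
  have hFlK : Fl y K = w.edges := by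
    rw [Fl_stable y (fun i hi => (hk1 i hi).1) K (le_max_left k k'), hk2]
  have hFlK' : Fl y' K = w.edges := by
    rw [Fl_stable y' (fun i hi => (hk1' i hi).1) K (le_max_right k k'), hk2']
  have key : ∀ j, Fl y (j + 1) = Fl y' (j + 1) →
      (yc y j).edges = (yc y' j).edges ∧ Fl y j = Fl y' j := by
    intro j h
    rw [Fl_succ, Fl_succ] at h
    exact List.append_inj h (hlenE j)
  have hdown : ∀ d, Fl y (K - d) = Fl y' (K - d) := by
    intro d
    induction d with
    | zero => rw [Nat.sub_zero, hFlK, hFlK']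
    | succ d ih =>
      rcases Nat.eq_zero_or_pos (K - d) with h | h
      · have : K - (d + 1) = K - d := by omega
        rw [this]; exact ih
      · have heq : K - d = (K - (d + 1)) + 1 := by omega
        rw [heq] at ih
        exact (key _ ih).2
  have hFl : ∀ j, Fl y j = Fl y' j := by
    intro j
    rcases Nat.le_total j K with hj | hj
    · have : j = K - (K - j) := by omega
      rw [this]; exact hdown (K - j)
    · rw [Fl_stable y (fun i hi => (hk1 i hi).1) j ((le_max_left k k').trans hj), ← hk2,
        Fl_stable y' (fun i hi => (hk1' i hi).1) j ((le_max_right k k').trans hj), ← hk2']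
  have hedges : ∀ j, (yc y j).edges = (yc y' j).edges := fun j => (key j (hFl (j + 1))).1
  have hsrcdown : ∀ d, (yc y (K - d)).src = (yc y' (K - d)).src := by
    intro d
    induction d with
    | zero =>
      rw [Nat.sub_zero, (hk1 K (le_max_left k k')).2, (hk1' K (le_max_right k k')).2]
    | succ d ih =>
      rcases Nat.eq_zero_or_pos (K - d) with h | h
      · have : K - (d + 1) = K - d := by omega
        rw [this]; exact ih
      · have heq : K - d = (K - (d + 1)) + 1 := by omega
        rw [heq] at ih
        set j := K - (d + 1) with hj
        have h1 : (yc y j).src = (yc y (j + 1)).rng := y.prop j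
        have h2 : (yc y' j).src = (yc y' (j + 1)).rng := y'.prop j
        rw [h1, h2]
        show G.endAt (yc y (j+1)).src (yc y (j+1)).edges
          = G.endAt (yc y' (j+1)).src (yc y' (j+1)).edges
        rw [ih, hedges (j + 1)]
  have hsrc : ∀ j, (yc y j).src = (yc y' j).src := by
    intro j
    rcases Nat.le_total j K with hj | hj
    · have : j = K - (K - j) := by omega
      rw [this]; exact hsrcdown (K - j)
    · rw [(hk1 j ((le_max_left k k').trans hj)).2, (hk1' j ((le_max_right k k').trans hj)).2]
  apply Subtype.ext
  funext i
  apply Subtype.ext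
  exact Path.ext' (hsrc i) (hedges i)

end DirGraph

namespace DirGraph
variable {G : DirGraph} {n : ℕ → ℕ}

theorem carry_Fl {e : G.E} {y z : Yt G n} {i0 : ℕ} (hc : Carry G n e y z i0) :
    ∀ m, i0 < m → Fl z m = Fl y m ++ [e] := by
  obtain ⟨c1, c2, c3, c4, c5, c6⟩ := hc
  intro m hm
  have hbase : Fl z (i0 + 1) = Fl y (i0 + 1) ++ [e] := by
    rw [Fl_succ, Fl_succ]
    have hz0 : Fl z i0 = [] := Fl_nil z fun i hi => (c3 i hi).1
    rw [hz0, List.append_nil]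
    have hc5 : (yc z i0).edges = (yc y i0).edges ++ Fl y i0 ++ [e] := c5
    rw [hc5]
  have : i0 + 1 ≤ m := hm
  induction m, this using Nat.le_induction with
  | base => exact hbase
  | succ m hm ih =>
    rw [Fl_succ, Fl_succ, c6 m (by omega), ih (by omega), List.append_assoc]

/-- The odometer applied to a representative of `w` represents `w·e`. -/
theorem rep_cons (hmono : StrictMono n)
    {w : G.Path} {y z : Yt G n} {e : G.E} (h : G.s e = w.rng)
    (hw : Represents G n w y) (hod : OdRel G n e y z) :
    Represents G n (w.cons e h) z := by
  obtain ⟨k, hk1, hk2⟩ := hw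
  rcases hod with ⟨i0, hc⟩ | ⟨hall, _⟩
  · obtain ⟨c1, c2, c3, c4, c5, c6⟩ := hc
    refine ⟨max k (i0 + 1), ?_, ?_⟩
    · intro i hi
      have hi0 : i0 < i := lt_of_lt_of_le (Nat.lt_of_lt_of_le (Nat.lt_succ_self i0)
        (le_max_right k (i0 + 1))) hi
      rw [c6 i hi0]
      exact ⟨(hk1 i ((le_max_left k (i0+1)).trans hi)).1,
        (hk1 i ((le_max_left k (i0+1)).trans hi)).2⟩
    · show (w.cons e h).edges = Fl z (max k (i0 + 1))
      have h1 : (w.cons e h).edges = w.edges ++ [e] := rfl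
      rw [h1, carry_Fl ⟨c1, c2, c3, c4, c5, c6⟩ _
        (Nat.lt_of_lt_of_le (Nat.lt_succ_self i0) (le_max_right k (i0 + 1)))]
      congr 1
      rw [Fl_stable y (fun i hi => (hk1 i hi).1) _ (le_max_left k (i0 + 1))]
      exact hk2
  · exfalso
    have h1 : (yc y k).length = 0 := by
      show (yc y k).edges.length = 0
      rw [(hk1 k le_rfl).1]; rfl
    have h2 := hall k
    have h3 : n k < n (k + 1) := hmono (Nat.lt_succ_self k)
    omega

end DirGraph

namespace DirGraph

theorem isPathFrom_of_append {G : DirGraph} :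
    ∀ (l₁ l₂ : List G.E) (x : G.V), G.IsPathFrom x (l₁ ++ l₂) →
      G.IsPathFrom x l₁ ∧ G.IsPathFrom (G.endAt x l₁) l₂
  | [], _, _, h => ⟨trivial, h⟩
  | e :: es, l₂, x, h =>
    ⟨⟨h.1, (isPathFrom_of_append es l₂ (G.r e) h.2).1⟩,
      (isPathFrom_of_append es l₂ (G.r e) h.2).2⟩

end DirGraph

open DirGraph in
/-- Every nonempty closed invariant subset `Y₀ ⊆ Y`
contains `τ(u) = (u, u, …)` for some vertex `u`, and for any such `u` it
contains `τ(w)` for every path `w` with `s(w) = u`. -/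
theorem stmt18 (G : DirGraph) [Fintype G.V] [Fintype G.E]
    (hnosource : ∀ v : G.V, ∃ e : G.E, G.r e = v)
    (hnosink : ∀ v : G.V, ∃ e : G.E, G.s e = v)
    (n : ℕ → ℕ) (h0 : n 0 = 1) (hmono : StrictMono n) (hdvd : ∀ i, n i ∣ n (i + 1))
    (τ : G.Path → Yt G n) (hτ : ∀ w, Represents G n w (τ w))
    (σ : G.E → Yt G n → Yt G n)
    (hσ : ∀ (e : G.E), ∀ y ∈ De G n e, OdRel G n e y (σ e y))
    (Y₀ : Set (Yt G n)) (hclosed : IsClosed Y₀) (hinv : Invariant G n σ Y₀)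
    (hne : Y₀.Nonempty) :
    (∃ u : G.V, τ (Path.nil u) ∈ Y₀) ∧
    ∀ u : G.V, τ (Path.nil u) ∈ Y₀ →
      ∀ w : G.Path, w.src = u → τ w ∈ Y₀ := by
  
  classical
  constructor
  · -- Part 1
    obtain ⟨y₀, hy₀⟩ := hne
    choose ed hed using hnosink
    set f : ℕ → Yt G n := fun m =>
      Nat.rec (motive := fun _ => Yt G n) y₀ (fun _ p => σ (ed ((yc p 0).rng)) p) m with hf
    have hDe : ∀ (z : Yt G n), z ∈ De G n (ed ((yc z 0).rng)) := fun z => (hed _).symm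
    have hmem : ∀ m, f m ∈ Y₀ := by
      intro m; induction m with
      | zero => exact hy₀
      | succ m ih => exact hinv.1 _ (f m) ⟨ih, hDe (f m)⟩
    have hod : ∀ m, OdRel G n (ed ((yc (f m) 0).rng)) (f m) (f (m + 1)) :=
      fun m => hσ _ (f m) (hDe (f m))
    have hgood : ∀ N : ℕ, ∃ m, ∃ u : G.V, ∀ i, i < N →
        (yc (f m) i).edges = [] ∧ (yc (f m) i).src = u := by
      intro N
      by_contra hno
      have hstep : ∀ m, (Fl (f (m + 1)) N).length = (Fl (f m) N).length + 1 := by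
        intro m
        rcases hod m with ⟨i0, hc⟩ | ⟨_, hz⟩
        · rcases Nat.lt_or_ge i0 N with hiN | hiN
          · rw [carry_Fl hc N hiN]; simp
          · exact absurd ⟨m + 1, G.r (ed ((yc (f m) 0).rng)),
              fun i hi => hc.2.2.1 i (lt_of_lt_of_le hi hiN)⟩ hno
        · exact absurd ⟨m + 1, G.r (ed ((yc (f m) 0).rng)), fun i _ => hz i⟩ hno
      have hgrow : ∀ m, m ≤ (Fl (f m) N).length := by
        intro m; induction m with
        | zero => exact Nat.zero_le _
        | succ m ih => rw [hstep m]; omega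
      have hb := sum_len_lt h0 hmono hdvd (f (n N)) N
      rw [← Fl_length] at hb
      have := hgrow (n N)
      omega
    choose mN uN hN using hgood
    have hpigeon : ∃ v : G.V, (uN ⁻¹' {v}).Infinite := by
      obtain ⟨v, hv⟩ := Finite.exists_infinite_fiber uN
      exact ⟨v, Set.infinite_coe_iff.mp hv⟩
    obtain ⟨v, hv⟩ := hpigeon
    refine ⟨v, ?_⟩
    have hx : ∀ i, (yc (τ (Path.nil v)) i).edges = [] ∧ (yc (τ (Path.nil v)) i).src = v :=
      rep_nil_coords (hτ _)
    choose Nj hNj1 hNj2 using fun j => hv.exists_gt j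
    have htend : Filter.Tendsto (fun j => f (mN (Nj j))) Filter.atTop
        (nhds (τ (Path.nil v))) := by
      rw [tendsto_subtype_rng, tendsto_pi_nhds]
      intro i
      rw [nhds_discrete, Filter.tendsto_pure]
      filter_upwards [Filter.eventually_ge_atTop i] with j hj
      apply Subtype.ext
      have hiN : i < Nj j := lt_of_le_of_lt hj (hNj2 j)
      have h1 := hN (Nj j) i hiN
      have h2 : uN (Nj j) = v := hNj1 j
      refine Path.ext' ?_ ?_
      · show (yc (f (mN (Nj j))) i).src = (yc (τ (Path.nil v)) i).src
        rw [h1.2, h2, (hx i).2]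
      · show (yc (f (mN (Nj j))) i).edges = (yc (τ (Path.nil v)) i).edges
        rw [h1.1, (hx i).1]
    exact hclosed.mem_of_tendsto htend
      (Filter.Eventually.of_forall fun j => hmem (mN (Nj j)))
  · -- Part 2
    intro u hu w hw
    have key : ∀ l : List G.E, ∀ hp : G.IsPathFrom u l, τ ⟨u, l, hp⟩ ∈ Y₀ := by
      intro l
      induction l using List.reverseRecOn with
      | nil => intro hp; exact hu
      | append_singleton l e ih =>
        intro hp
        obtain ⟨h1, h2⟩ := isPathFrom_of_append l [e] u hp
        set p : G.Path := ⟨u, l, h1⟩ with hp'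
        have he : G.s e = p.rng := h2.1
        have hDe : τ p ∈ De G n e := by
          show (yc (τ p) 0).rng = G.s e
          rw [rep_rng (hτ p), he]
        have hz : σ e (τ p) ∈ Y₀ := hinv.1 e (τ p) ⟨ih h1, hDe⟩
        have hrep : Represents G n (p.cons e he) (σ e (τ p)) :=
          rep_cons hmono he (hτ p) (hσ e (τ p) hDe)
        have huniq := rep_unique h0 hmono hdvd (hτ (p.cons e he)) hrep
        have heq : (⟨u, l ++ [e], hp⟩ : G.Path) = p.cons e he := Path.ext' rfl rfl
        rw [heq, huniq]
        exact hz
    obtain ⟨ws, we, wv⟩ := w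
    have hw' : ws = u := hw
    subst hw'
    exact key we wv
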